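/- For any ξ ∈ Φ_BYG, the fixed point X = (-1/(τ_R - δ_R - 1), δ_R/(τ_R - δ_R - 1)) belongs to the triangle Ω(ξ). (This is the key step in the paper's proof that the closure of the unstable manifold of X is contained in Ω(ξ).) -/

import Mathlib

noncomputable section

/-- The parameter region `Φ`: `τ_L > δ_L + 1`, `δ_L > 0`, `τ_R < -(δ_R + 1)`, `δ_R > 0`. -/
def PhiSet : Set (ℝ × ℝ × ℝ × ℝ) :=
  {ξ | ξ.1 > ξ.2.1 + 1 ∧ 0 < ξ.2.1 ∧ ξ.2.2.1 < -(ξ.2.2.2 + 1) ∧ 0 < ξ.2.2.2}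

/-- The function `φ` whose zero set bounds `Φ_BYG`. -/
def phiFn (ξ : ℝ × ℝ × ℝ × ℝ) : ℝ :=
  ξ.2.2.2 - (1 + ξ.2.2.1) * ξ.2.1
    + (1 / 2) * ((1 + ξ.2.2.1) * ξ.1 - ξ.2.2.1 - ξ.2.1 - ξ.2.2.2)
      * (ξ.1 + Real.sqrt (ξ.1 ^ 2 - 4 * ξ.2.1))

/-- The region `Φ_BYG = {ξ ∈ Φ | φ(ξ) > 0}`. -/
def PhiBYG : Set (ℝ × ℝ × ℝ × ℝ) := {ξ ∈ PhiSet | 0 < phiFn ξ}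

/-- The two-dimensional border-collision normal form `f_ξ`. -/
def fmap (ξ : ℝ × ℝ × ℝ × ℝ) (z : ℝ × ℝ) : ℝ × ℝ :=
  if z.1 ≤ 0 then (ξ.1 * z.1 + z.2 + 1, -(ξ.2.1 * z.1))
  else (ξ.2.2.1 * z.1 + z.2 + 1, -(ξ.2.2.2 * z.1))

/-- The unstable eigenvalue `λ_L^u` of `A_L`. -/
def lamLu (ξ : ℝ × ℝ × ℝ × ℝ) : ℝ := (ξ.1 + Real.sqrt (ξ.1 ^ 2 - 4 * ξ.2.1)) / 2

/-- The stable eigenvalue `λ_L^s` of `A_L`. -/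
def lamLs (ξ : ℝ × ℝ × ℝ × ℝ) : ℝ := (ξ.1 - Real.sqrt (ξ.1 ^ 2 - 4 * ξ.2.1)) / 2

/-- The fixed point `X` of the right piece of `f_ξ`. -/
def fpX (ξ : ℝ × ℝ × ℝ × ℝ) : ℝ × ℝ :=
  (-1 / (ξ.2.2.1 - ξ.2.2.2 - 1), ξ.2.2.2 / (ξ.2.2.1 - ξ.2.2.2 - 1))

/-- The fixed point `Y` of the left piece of `f_ξ`. -/
def fpY (ξ : ℝ × ℝ × ℝ × ℝ) : ℝ × ℝ :=
  (-1 / (ξ.1 - ξ.2.1 - 1), ξ.2.1 / (ξ.1 - ξ.2.1 - 1))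

/-- The intersection point of the line through `p` with slope `sp`
and the line through `q` with slope `sq` (assuming `sp ≠ sq`). -/
def lineInter (p q : ℝ × ℝ) (sp sq : ℝ) : ℝ × ℝ :=
  ((q.2 - p.2 + sp * p.1 - sq * q.1) / (sp - sq),
   p.2 + sp * ((q.2 - p.2 + sp * p.1 - sq * q.1) / (sp - sq) - p.1))

/-- The point `D`, the intersection of `E^u(Y)` with `y = 0`. -/
def ptD (ξ : ℝ × ℝ × ℝ × ℝ) : ℝ × ℝ := (1 / (1 - lamLs ξ), 0)

/-- The point `B`, the intersection of `E^u(Y)` (slope `λ_L^u - τ_L`) with the line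
through `f_ξ(D)` parallel to `E^s(Y)` (slope `λ_L^s - τ_L`). -/
def ptB (ξ : ℝ × ℝ × ℝ × ℝ) : ℝ × ℝ :=
  lineInter (fpY ξ) (fmap ξ (ptD ξ)) (lamLu ξ - ξ.1) (lamLs ξ - ξ.1)

/-- The closed triangle `Ω(ξ)` with vertices `D`, `f_ξ(D)`, `B`. -/
def OmegaSet (ξ : ℝ × ℝ × ℝ × ℝ) : Set (ℝ × ℝ) :=
  convexHull ℝ {ptD ξ, fmap ξ (ptD ξ), ptB ξ}


private lemma combo_mem_convexHull {x y z : ℝ × ℝ} {a b c : ℝ}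
    (ha : 0 ≤ a) (hb : 0 ≤ b) (hc : 0 ≤ c) (habc : a + b + c = 1) :
    a • x + b • y + c • z ∈ convexHull ℝ ({x, y, z} : Set (ℝ × ℝ)) := by
  have h := (convex_convexHull ℝ ({x, y, z} : Set (ℝ × ℝ))).sum_mem
    (t := (Finset.univ : Finset (Fin 3))) (w := ![a, b, c]) (z := ![x, y, z])
    (by intro i _; fin_cases i <;> simpa)
    (by simp [Fin.sum_univ_three]; linarith)
    (by intro i _; fin_cases i <;> exact subset_convexHull ℝ _ (by simp))
  simpa [Fin.sum_univ_three] using h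

set_option maxHeartbeats 1000000 in
private lemma main_lemma (u s T d : ℝ) (hs0 : 0 < s) (hs1 : s < 1) (hu1 : 1 < u)
    (hT : T < -(d + 1)) (hd : 0 < d) :
    fpX (u + s, u * s, T, d) ∈ OmegaSet (u + s, u * s, T, d) := by
  have hsq : Real.sqrt ((u + s) ^ 2 - 4 * (u * s)) = u - s := by
    rw [show (u + s) ^ 2 - 4 * (u * s) = (u - s) ^ 2 by ring, Real.sqrt_sq (by linarith)]
  have h1s : (0:ℝ) < 1 - s := by linarith
  have hus : (0:ℝ) < u - s := by linarith
  have hu0 : (0:ℝ) < u := by linarith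
  have hT0 : T < 0 := by linarith
  have husp : 0 < u * s := mul_pos hu0 hs0
  have hE : 0 < d + u * s - u * T := by nlinarith [mul_pos hu0 (neg_pos.mpr hT0)]
  have hP1 : (0:ℝ) < 1 + d - T := by linarith
  have hmTd : T - d - 1 < 0 := by linarith
  have hY1 : (0:ℝ) < u + s - u * s - 1 := by nlinarith [mul_pos (sub_pos.mpr hu1) h1s]
  have hlu : lamLu (u + s, u * s, T, d) = u := by
    show (u + s + Real.sqrt ((u + s) ^ 2 - 4 * (u * s))) / 2 = u
    rw [hsq]; ring
  have hls : lamLs (u + s, u * s, T, d) = s := by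
    show (u + s - Real.sqrt ((u + s) ^ 2 - 4 * (u * s))) / 2 = s
    rw [hsq]; ring
  have hD : ptD (u + s, u * s, T, d) = (1 / (1 - s), 0) := by
    rw [ptD, hls]
  have hDx : (0:ℝ) < 1 / (1 - s) := by positivity
  have hF : fmap (u + s, u * s, T, d) ((1 / (1 - s), 0) : ℝ × ℝ)
      = (T * (1 / (1 - s)) + 0 + 1, -(d * (1 / (1 - s)))) := by
    rw [fmap, if_neg (by simpa using not_le.mpr hDx)]
  have hB : ptB (u + s, u * s, T, d)
      = ((u * T - d - s + u - u * s) / ((1 - s) * (u - s)),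
         s * (d + u * s - u * T) / ((1 - s) * (u - s))) := by
    rw [ptB, hD, hF, hlu, hls]
    show lineInter (-1 / (u + s - u * s - 1), u * s / (u + s - u * s - 1))
        (T * (1 / (1 - s)) + 0 + 1, -(d * (1 / (1 - s))))
        (u - (u + s)) (s - (u + s)) = _
    rw [show u - (u + s) = -s by ring, show s - (u + s) = -u by ring]
    have hx : (-(d * (1 / (1 - s))) - u * s / (u + s - u * s - 1)
        + (-s) * (-1 / (u + s - u * s - 1)) - (-u) * (T * (1 / (1 - s)) + 0 + 1)) / (-s - -u)
        = (u * T - d - s + u - u * s) / ((1 - s) * (u - s)) := by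
      rw [show (-s:ℝ) - -u = u - s by ring]
      have hY1' : u + s - s * u - 1 ≠ 0 := by nlinarith
      field_simp
      ring
    apply Prod.ext
    · show (-(d * (1 / (1 - s))) - u * s / (u + s - u * s - 1)
        + (-s) * (-1 / (u + s - u * s - 1)) - (-u) * (T * (1 / (1 - s)) + 0 + 1)) / (-s - -u) = _
      exact hx
    · show u * s / (u + s - u * s - 1)
        + (-s) * ((-(d * (1 / (1 - s))) - u * s / (u + s - u * s - 1)
          + (-s) * (-1 / (u + s - u * s - 1)) - (-u) * (T * (1 / (1 - s)) + 0 + 1)) / (-s - -u)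
          - (-1 / (u + s - u * s - 1))) = _
      rw [hx]
      have hY1' : u + s - s * u - 1 ≠ 0 := by nlinarith
      field_simp
      ring
  -- the weights
  set b : ℝ := 1 / (1 + d - T) with hbdef
  set c : ℝ := d * (u - s) / ((1 + d - T) * (d + u * s - u * T)) with hcdef
  have hb : 0 ≤ b := by positivity
  have hc : 0 ≤ c := by positivity
  have hN : 0 ≤ (d - T) * (d + u * s - u * T) - d * (u - s) := by
    have h5 : 0 < u * (-T - (d + 1)) := mul_pos hu0 (by linarith)
    have hEus : 0 < d + u * s - u * T - (u - s) := by nlinarith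
    nlinarith [mul_pos (show (0:ℝ) < d - T by linarith) hEus, mul_pos (neg_pos.mpr hT0) hus]
  have ha : 0 ≤ 1 - b - c := by
    rw [show 1 - b - c
        = ((d - T) * (d + u * s - u * T) - d * (u - s)) / ((1 + d - T) * (d + u * s - u * T)) by
      have hE' : d + u * s - T * u ≠ 0 := by nlinarith
      rw [hbdef, hcdef]; field_simp; ring]
    positivity
  have hsum : (1 - b - c) + b + c = 1 := by ring
  have hX : fpX (u + s, u * s, T, d)
      = (1 - b - c) • ((1 / (1 - s), 0) : ℝ × ℝ)
        + b • ((T * (1 / (1 - s)) + 0 + 1, -(d * (1 / (1 - s)))) : ℝ × ℝ)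
        + c • (((u * T - d - s + u - u * s) / ((1 - s) * (u - s)),
            s * (d + u * s - u * T) / ((1 - s) * (u - s))) : ℝ × ℝ) := by
    have h1s' : (1:ℝ) - s ≠ 0 := h1s.ne'
    have hus' : u - s ≠ 0 := hus.ne'
    have hmTd' : T - d - 1 ≠ 0 := hmTd.ne
    have hP1' : (1:ℝ) + d - T ≠ 0 := hP1.ne'
    have hE' : d + u * s - u * T ≠ 0 := hE.ne'
    have hE'' : d + u * s - T * u ≠ 0 := by nlinarith
    have hE''' : d + s * u - T * u ≠ 0 := by nlinarith
    rw [hbdef, hcdef]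
    apply Prod.ext
    · show -1 / (T - d - 1) = _
      simp only [Prod.fst_add, Prod.smul_fst, smul_eq_mul]
      field_simp
      ring
    · show d / (T - d - 1) = _
      simp only [Prod.snd_add, Prod.smul_snd, smul_eq_mul]
      field_simp
      ring
  rw [OmegaSet, hD, hF, hB, hX]
  exact combo_mem_convexHull ha hb hc hsum

/-- Lemma 3.2 (key step): for any `ξ ∈ Φ_BYG`, the fixed point `X` lies in `Ω(ξ)`. -/
theorem fpX_mem_Omega (ξ : ℝ × ℝ × ℝ × ℝ) (hξ : ξ ∈ PhiBYG) :
    fpX ξ ∈ OmegaSet ξ := by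
  obtain ⟨tL, dL, tR, dR⟩ := ξ
  obtain ⟨hΦ, -⟩ := hξ
  obtain ⟨h1, h2, h3, h4⟩ := hΦ
  simp only at h1 h2 h3 h4
  have hd0 : 0 < tL ^ 2 - 4 * dL := by nlinarith [sq_nonneg (dL - 1)]
  set r := Real.sqrt (tL ^ 2 - 4 * dL) with hrdef
  have hr2 : r ^ 2 = tL ^ 2 - 4 * dL := Real.sq_sqrt hd0.le
  have hr0 : 0 < r := Real.sqrt_pos.mpr hd0
  have htL : 1 < tL := by nlinarith
  have hrtL : r < tL := by nlinarith [hr2, hr0]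
  have hs0 : 0 < (tL - r) / 2 := by linarith
  have hs1 : (tL - r) / 2 < 1 := by nlinarith [hr2, hr0]
  have hu1 : 1 < (tL + r) / 2 := by nlinarith [hr2, hr0]
  have hrw : ((tL, dL, tR, dR) : ℝ × ℝ × ℝ × ℝ)
      = ((tL + r) / 2 + (tL - r) / 2, ((tL + r) / 2) * ((tL - r) / 2), tR, dR) := by
    have h1' : tL = (tL + r) / 2 + (tL - r) / 2 := by ring
    have h2' : dL = ((tL + r) / 2) * ((tL - r) / 2) := by linear_combination (1/4 : ℝ) * hr2
    rw [← h1', ← h2']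
  rw [hrw]
  exact main_lemma _ _ _ _ hs0 hs1 hu1 h3 h4


end
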